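/- Let ‖·‖ be a norm on c₀₀ that is permutation-invariant and multiplicative, and suppose ‖1ⁿ‖ = 1 for every n ≥ 1. Then for every x ∈ c₀₀ one has ‖x‖ = ‖x‖_∞ = max_i |x_i|. -/

import Mathlib

/-- Tensor product of finitely supported sequences, regarded as a finitely
supported sequence via a fixed bijection `e : ℕ ≃ ℕ × ℕ`. -/
noncomputable def tensor (e : ℕ ≃ ℕ × ℕ) (x y : ℕ →₀ ℝ) : ℕ →₀ ℝ :=
  Finsupp.onFinset ((x.support ×ˢ y.support).image e.symm)
    (fun n => x (e n).1 * y (e n).2)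
    (fun n h => by
      simp only [Finset.mem_image, Finset.mem_product]
      exact ⟨e n, ⟨Finsupp.mem_support_iff.2 (left_ne_zero_of_mul h),
        Finsupp.mem_support_iff.2 (right_ne_zero_of_mul h)⟩, e.symm_apply_apply n⟩)

/-- The sequence `1ⁿ` consisting of `n` ones followed by zeros. -/
noncomputable def oneVec (n : ℕ) : ℕ →₀ ℝ :=
  Finsupp.indicator (Finset.range n) (fun _ _ => 1)

/-! ### Auxiliary lemmas -/

lemma exists_perm_image : ∀ (n : ℕ) (S T : Finset ℕ), S.card = n → T.card = n →
    ∃ σ : Equiv.Perm ℕ, T = S.image σ := by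
  intro n
  induction n with
  | zero =>
    intro S T hS hT
    exact ⟨1, by simp [Finset.card_eq_zero.mp hS, Finset.card_eq_zero.mp hT]⟩
  | succ n ih =>
    intro S T hS hT
    obtain ⟨a, ha⟩ := Finset.card_pos.mp (by omega : 0 < S.card)
    obtain ⟨b, hb⟩ := Finset.card_pos.mp (by omega : 0 < T.card)
    obtain ⟨σ', hσ'⟩ := ih (S.erase a) (T.erase b)
      (by rw [Finset.card_erase_of_mem ha, hS]; rfl)
      (by rw [Finset.card_erase_of_mem hb, hT]; rfl)
    refine ⟨Equiv.swap (σ' a) b * σ', ?_⟩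
    have himg : (S.erase a).image (⇑(Equiv.swap (σ' a) b * σ')) = T.erase b := by
      rw [hσ']
      symm
      apply Finset.image_congr
      intro s hs
      have hsa : s ≠ a := Finset.ne_of_mem_erase hs
      have h1 : σ' s ∈ T.erase b := by rw [hσ']; exact Finset.mem_image_of_mem _ hs
      have h2 : σ' s ≠ b := Finset.ne_of_mem_erase h1
      have h3 : σ' s ≠ σ' a := fun h => hsa (σ'.injective h)
      simp [Equiv.Perm.mul_apply, Equiv.swap_apply_of_ne_of_ne h3 h2]
    have hS' : S = insert a (S.erase a) := (Finset.insert_erase ha).symm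
    rw [hS', Finset.image_insert, himg]
    have : (Equiv.swap (σ' a) b * σ') a = b := by
      simp [Equiv.Perm.mul_apply]
    rw [this, Finset.insert_erase hb]

lemma equivMapDomain_indicator (σ : Equiv.Perm ℕ) (S : Finset ℕ) :
    Finsupp.equivMapDomain σ (Finsupp.indicator S fun _ _ => (1:ℝ)) =
      Finsupp.indicator (S.image σ) fun _ _ => (1:ℝ) := by
  ext i
  rw [Finsupp.equivMapDomain_apply]
  by_cases h : σ.symm i ∈ S
  · rw [Finsupp.indicator_of_mem h, Finsupp.indicator_of_mem]
    exact Finset.mem_image.mpr ⟨σ.symm i, h, σ.apply_symm_apply i⟩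
  · rw [Finsupp.indicator_of_notMem h, Finsupp.indicator_of_notMem]
    intro hc
    obtain ⟨j, hj, hji⟩ := Finset.mem_image.mp hc
    exact h (by rwa [← hji, Equiv.symm_apply_apply])

lemma tensor_apply (e : ℕ ≃ ℕ × ℕ) (x y : ℕ →₀ ℝ) (n : ℕ) :
    tensor e x y n = x (e n).1 * y (e n).2 := rfl

lemma sum_tensor (e : ℕ ≃ ℕ × ℕ) (x y : ℕ →₀ ℝ) :
    ∑ i ∈ (tensor e x y).support, tensor e x y i =
      (∑ i ∈ x.support, x i) * (∑ j ∈ y.support, y j) := by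
  have h1 : ∑ i ∈ (tensor e x y).support, tensor e x y i
      = ∑ i ∈ (x.support ×ˢ y.support).image e.symm, tensor e x y i := by
    apply Finset.sum_subset Finsupp.support_onFinset_subset
    intro i _ hi
    exact Finsupp.notMem_support_iff.mp hi
  rw [h1, Finset.sum_image (fun a _ b _ h => e.symm.injective h), Finset.sum_product,
    Finset.sum_mul_sum]
  refine Finset.sum_congr rfl fun i _ => Finset.sum_congr rfl fun j _ => ?_
  rw [tensor_apply, Equiv.apply_symm_apply]

lemma sum_equivMapDomain (σ : Equiv.Perm ℕ) (v : ℕ →₀ ℝ) :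
    ∑ i ∈ (Finsupp.equivMapDomain σ v).support, Finsupp.equivMapDomain σ v i
      = ∑ i ∈ v.support, v i := by
  have hs : (Finsupp.equivMapDomain σ v).support = v.support.map σ.toEmbedding := rfl
  rw [hs, Finset.sum_map]
  refine Finset.sum_congr rfl fun i _ => ?_
  rw [Finsupp.equivMapDomain_apply]
  simp

/-- Iterated tensor powers: `tpow e x k = x ⊗ x ⊗ ⋯ ⊗ x` (`k+1` factors). -/
noncomputable def tpow (e : ℕ ≃ ℕ × ℕ) (x : ℕ →₀ ℝ) : ℕ → (ℕ →₀ ℝ)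
  | 0 => x
  | k + 1 => tensor e x (tpow e x k)

lemma tpow_bound (e : ℕ ≃ ℕ × ℕ) (x : ℕ →₀ ℝ) (B : ℝ) (hB : ∀ i, |x i| ≤ B) :
    ∀ k i, |tpow e x k i| ≤ B ^ (k + 1) := by
  have hB0 : 0 ≤ B := le_trans (abs_nonneg _) (hB 0)
  intro k
  induction k with
  | zero => intro i; simpa [tpow] using hB i
  | succ k ih =>
    intro i
    show |tensor e x (tpow e x k) i| ≤ B ^ (k + 2)
    rw [tensor_apply, abs_mul]
    calc |x (e i).1| * |tpow e x k (e i).2| ≤ B * B ^ (k + 1) :=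
          mul_le_mul (hB _) (ih _) (abs_nonneg _) hB0
      _ = B ^ (k + 2) := by ring

lemma rot_sum (n : ℕ) (hn : 1 ≤ n) (v : ℕ →₀ ℝ) (hsupp : ∀ i, n < i → v i = 0) :
    haveI : NeZero n := ⟨by omega⟩
    ∑ j : Fin n, Finsupp.equivMapDomain
        (Equiv.Perm.extendDomain (Equiv.addRight j) Fin.equivSubtype) v
      = (∑ i ∈ Finset.range n, v i) • oneVec n + (n : ℝ) • Finsupp.single n (v n) := by
  haveI : NeZero n := ⟨by omega⟩
  ext i
  rw [Finsupp.finset_sum_apply]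
  simp only [Finsupp.equivMapDomain_apply, Equiv.Perm.extendDomain_symm]
  by_cases h : i < n
  · have key : ∀ j : Fin n,
        (Equiv.Perm.extendDomain (Equiv.addRight j).symm Fin.equivSubtype) i
          = ((⟨i, h⟩ - j : Fin n) : ℕ) := by
      intro j
      rw [Equiv.Perm.extendDomain_apply_subtype _ Fin.equivSubtype h]
      simp [Fin.equivSubtype, Equiv.symm_apply_eq, sub_add_cancel, sub_eq_add_neg]
    have lhs : ∑ j : Fin n,
        v ((Equiv.Perm.extendDomain (Equiv.addRight j).symm Fin.equivSubtype) i)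
          = ∑ l : Fin n, v l := by
      rw [Finset.sum_congr rfl (fun j _ => by rw [key j])]
      exact Fintype.sum_equiv (Equiv.subLeft ⟨i, h⟩) _ _
        (fun j => by rw [Equiv.subLeft_apply])
    rw [lhs, Fin.sum_univ_eq_sum_range (fun l => v l) n]
    have h1 : oneVec n i = 1 := Finsupp.indicator_of_mem (Finset.mem_range.mpr h) _
    have h2 : Finsupp.single n (v n) i = 0 := by
      rw [Finsupp.single_apply, if_neg (by omega)]
    rw [Finsupp.add_apply, Finsupp.smul_apply, Finsupp.smul_apply, h1, h2]
    simp
  · have key : ∀ j : Fin n,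
        (Equiv.Perm.extendDomain (Equiv.addRight j).symm Fin.equivSubtype) i = i := fun j =>
      Equiv.Perm.extendDomain_apply_not_subtype _ _ h
    rw [Finset.sum_congr rfl (fun j _ => by rw [key j])]
    rw [Finset.sum_const, Finset.card_univ, Fintype.card_fin, nsmul_eq_mul]
    have h1 : oneVec n i = 0 := Finsupp.indicator_of_notMem (by simp; omega) _
    rw [Finsupp.add_apply, Finsupp.smul_apply, Finsupp.smul_apply, h1, smul_zero, zero_add,
      smul_eq_mul]
    by_cases hin : i = n
    · subst hin
      rw [Finsupp.single_apply, if_pos rfl]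
    · rw [Finsupp.single_apply, if_neg (fun hh => hin hh.symm), mul_zero,
        hsupp i (by omega), mul_zero]

section NLemmas

variable (e : ℕ ≃ ℕ × ℕ) (N : (ℕ →₀ ℝ) → ℝ)
    (hadd : ∀ x y, N (x + y) ≤ N x + N y)
    (hsmul : ∀ (c : ℝ) (x), N (c • x) = |c| * N x)
    (hdef : ∀ x, N x = 0 ↔ x = 0)
    (hperm : ∀ (σ : Equiv.Perm ℕ) (x), N (Finsupp.equivMapDomain σ x) = N x)
    (hmul : ∀ x y, N (tensor e x y) = N x * N y)
    (hone : ∀ n : ℕ, 1 ≤ n → N (oneVec n) = 1)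

include hadd hsmul hdef hperm hmul hone

lemma N_zero : N 0 = 0 := (hdef 0).mpr rfl

lemma N_neg (x) : N (-x) = N x := by
  have h : -x = (-1 : ℝ) • x := by simp
  rw [h, hsmul]; simp

lemma N_nonneg (x) : 0 ≤ N x := by
  have h := hadd x (-x)
  rw [add_neg_cancel, N_zero e N hadd hsmul hdef hperm hmul hone,
    N_neg e N hadd hsmul hdef hperm hmul hone] at h
  linarith

lemma N_sum_le {ι : Type*} (s : Finset ι) (f : ι → (ℕ →₀ ℝ)) :
    N (∑ i ∈ s, f i) ≤ ∑ i ∈ s, N (f i) := by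
  classical
  induction s using Finset.induction_on with
  | empty => simp [N_zero e N hadd hsmul hdef hperm hmul hone]
  | insert _ _ h ih =>
    rw [Finset.sum_insert h, Finset.sum_insert h]
    exact le_trans (hadd _ _) (by linarith)

lemma N_ind (S : Finset ℕ) (hS : S.Nonempty) :
    N (Finsupp.indicator S fun _ _ => (1:ℝ)) = 1 := by
  obtain ⟨σ, hσ⟩ := exists_perm_image S.card (Finset.range S.card) S
    (Finset.card_range _) rfl
  have h : Finsupp.indicator S (fun _ _ => (1:ℝ))
      = Finsupp.equivMapDomain σ (oneVec S.card) := by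
    rw [oneVec, equivMapDomain_indicator, ← hσ]
  rw [h, hperm, hone _ (Finset.card_pos.mpr hS)]

lemma N_single (i : ℕ) (c : ℝ) : N (Finsupp.single i c) = |c| := by
  have h1 : Finsupp.single i c = c • Finsupp.indicator {i} (fun _ _ => (1:ℝ)) := by
    ext j
    by_cases h : j = i
    · subst h; simp [Finsupp.indicator_of_mem (Finset.mem_singleton_self j)]
    · rw [Finsupp.smul_apply, Finsupp.indicator_of_notMem (by simpa using h)]
      simp [Finsupp.single_apply, Ne.symm h]
  rw [h1, hsmul, N_ind e N hadd hsmul hdef hperm hmul hone _ (Finset.singleton_nonempty i),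
    mul_one]

lemma UB_nonneg : ∀ (n : ℕ) (x : ℕ →₀ ℝ), x.support.card ≤ n → (∀ i, 0 ≤ x i) →
    ∀ B : ℝ, (∀ i, x i ≤ B) → N x ≤ B := by
  intro n
  induction n with
  | zero =>
    intro x hcard _ B hB
    have hx : x = 0 := by
      rw [← Finsupp.support_eq_empty, ← Finset.card_eq_zero]; omega
    subst hx
    rw [N_zero e N hadd hsmul hdef hperm hmul hone]
    simpa using hB 0
  | succ n ih =>
    intro x hcard hpos B hB
    by_cases hx : x = 0
    · subst hx
      rw [N_zero e N hadd hsmul hdef hperm hmul hone]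
      simpa using hB 0
    · have hsupp : x.support.Nonempty := Finsupp.support_nonempty_iff.mpr hx
      obtain ⟨i0, hi0, hmin⟩ := Finset.exists_min_image x.support (fun i => x i) hsupp
      set a := x i0 with ha
      have ha0 : 0 ≤ a := hpos i0
      have haB : a ≤ B := hB i0
      set v := Finsupp.indicator x.support (fun _ _ => (1:ℝ)) with hv
      have hvi : ∀ i, v i = if i ∈ x.support then (1:ℝ) else 0 := by
        intro i
        by_cases h : i ∈ x.support
        · simp [hv, Finsupp.indicator_of_mem h, h]
        · simp [hv, Finsupp.indicator_of_notMem h, h]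
      set x' := x - a • v with hx'
      have hx'i : ∀ i, x' i = x i - a * v i := by intro i; simp [hx']
      have hsub : x'.support ⊆ x.support.erase i0 := by
        intro i hi
        rw [Finsupp.mem_support_iff] at hi
        rw [hx'i, hvi] at hi
        rw [Finset.mem_erase, Finsupp.mem_support_iff]
        constructor
        · rintro rfl
          simp only [hi0, if_true, mul_one] at hi
          exact hi (by rw [ha]; ring)
        · intro h0
          rw [h0] at hi
          simp [Finsupp.mem_support_iff, h0] at hi
      have hcard' : x'.support.card ≤ n := by
        have hle := Finset.card_le_card hsub
        rw [Finset.card_erase_of_mem hi0] at hle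
        omega
      have hpos' : ∀ i, 0 ≤ x' i := by
        intro i
        rw [hx'i, hvi]
        by_cases h : i ∈ x.support
        · simp only [h, if_true, mul_one]
          exact sub_nonneg.mpr (hmin i h)
        · simp only [h, if_false, mul_zero, sub_zero]
          exact hpos i
      have hB' : ∀ i, x' i ≤ B - a := by
        intro i
        rw [hx'i, hvi]
        by_cases h : i ∈ x.support
        · simp only [h, if_true, mul_one]
          linarith [hB i]
        · simp only [h, if_false, mul_zero, sub_zero]
          have h0 : x i = 0 := Finsupp.notMem_support_iff.mp h
          linarith
      have hNx' := ih x' hcard' hpos' (B - a) hB'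
      have hdecomp : x = x' + a • v := by rw [hx']; abel
      calc N x = N (x' + a • v) := by rw [← hdecomp]
        _ ≤ N x' + N (a • v) := hadd _ _
        _ = N x' + |a| * N v := by rw [hsmul]
        _ = N x' + a := by
            rw [hv, N_ind e N hadd hsmul hdef hperm hmul hone _ hsupp,
              abs_of_nonneg ha0, mul_one]
        _ ≤ B := by linarith

lemma UB2 (x : ℕ →₀ ℝ) (B : ℝ) (hB : ∀ i, |x i| ≤ B) : N x ≤ 2 * B := by
  have hB0 : 0 ≤ B := le_trans (abs_nonneg _) (hB 0)
  set xp := x.mapRange (fun r => max r 0) (by simp) with hxp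
  set xm := x.mapRange (fun r => max (-r) 0) (by simp) with hxm
  have hxpi : ∀ i, xp i = max (x i) 0 := fun i => Finsupp.mapRange_apply
  have hxmi : ∀ i, xm i = max (-(x i)) 0 := fun i => Finsupp.mapRange_apply
  have hdecomp : x = xp + (-xm) := by
    ext i
    rw [Finsupp.add_apply, Finsupp.neg_apply, hxpi, hxmi]
    rcases le_total (x i) 0 with h | h
    · rw [max_eq_right h, max_eq_left (by linarith)]; ring
    · rw [max_eq_left h, max_eq_right (by linarith)]; ring
  have hp : N xp ≤ B := by
    apply UB_nonneg e N hadd hsmul hdef hperm hmul hone xp.support.card xp le_rfl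
    · intro i; rw [hxpi]; exact le_max_right _ _
    · intro i; rw [hxpi]
      exact max_le (le_trans (le_abs_self _) (hB i)) hB0
  have hm : N xm ≤ B := by
    apply UB_nonneg e N hadd hsmul hdef hperm hmul hone xm.support.card xm le_rfl
    · intro i; rw [hxmi]; exact le_max_right _ _
    · intro i; rw [hxmi]
      exact max_le (le_trans (neg_le_abs _) (hB i)) hB0
  calc N x = N (xp + (-xm)) := by rw [← hdecomp]
    _ ≤ N xp + N (-xm) := hadd _ _
    _ = N xp + N xm := by rw [N_neg e N hadd hsmul hdef hperm hmul hone]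
    _ ≤ 2 * B := by linarith

lemma Npow (x : ℕ →₀ ℝ) : ∀ k : ℕ, N (tpow e x k) = N x ^ (k + 1) := by
  intro k
  induction k with
  | zero => simp [tpow]
  | succ k ih =>
    show N (tensor e x (tpow e x k)) = N x ^ (k + 2)
    rw [hmul, ih]
    ring

lemma UB (x : ℕ →₀ ℝ) (B : ℝ) (hB : ∀ i, |x i| ≤ B) : N x ≤ B := by
  have hB0 : 0 ≤ B := le_trans (abs_nonneg _) (hB 0)
  by_contra hc
  push_neg at hc
  rcases eq_or_lt_of_le hB0 with hB0' | hB0'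
  · have hx : x = 0 := by
      ext i
      have h1 := hB i
      rw [← hB0'] at h1
      have := abs_nonneg (x i)
      have : |x i| = 0 := le_antisymm h1 this
      simpa using this
    rw [hx, N_zero e N hadd hsmul hdef hperm hmul hone] at hc
    linarith
  · have hpow : ∀ k : ℕ, N x ^ (k + 1) ≤ 2 * B ^ (k + 1) := by
      intro k
      rw [← Npow e N hadd hsmul hdef hperm hmul hone x k]
      exact UB2 e N hadd hsmul hdef hperm hmul hone _ _ (tpow_bound e x B hB k)
    have hr : 1 < N x / B := (one_lt_div hB0').mpr hc
    obtain ⟨k, hk⟩ := pow_unbounded_of_one_lt (2:ℝ) hr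
    have h2 : (N x / B) ^ (k + 1) ≤ 2 := by
      rw [div_pow, div_le_iff₀ (by positivity)]
      calc N x ^ (k + 1) ≤ 2 * B ^ (k + 1) := hpow k
        _ = 2 * B ^ (k + 1) := rfl
    have h3 : (N x / B) ^ k ≤ (N x / B) ^ (k + 1) :=
      pow_le_pow_right₀ (le_of_lt hr) (by omega)
    linarith

lemma rot_ineq (n : ℕ) (hn : 1 ≤ n) (v : ℕ →₀ ℝ) (hsupp : ∀ i, n < i → v i = 0) :
    (n : ℝ) * |v n| ≤ n * N v + |∑ i ∈ Finset.range n, v i| := by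
  haveI : NeZero n := ⟨by omega⟩
  set s := ∑ i ∈ Finset.range n, v i with hs
  set T := ∑ j : Fin n, Finsupp.equivMapDomain
      (Equiv.Perm.extendDomain (Equiv.addRight j) Fin.equivSubtype) v with hT
  have hTle : N T ≤ n * N v := by
    calc N T ≤ ∑ j : Fin n, N (Finsupp.equivMapDomain
          (Equiv.Perm.extendDomain (Equiv.addRight j) Fin.equivSubtype) v) :=
        N_sum_le e N hadd hsmul hdef hperm hmul hone _ _
      _ = ∑ _j : Fin n, N v := Finset.sum_congr rfl (fun j _ => hperm _ _)
      _ = n * N v := by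
          rw [Finset.sum_const, Finset.card_univ, Fintype.card_fin, nsmul_eq_mul]
  have hid : T = s • oneVec n + (n : ℝ) • Finsupp.single n (v n) := rot_sum n hn v hsupp
  have h2 : (n : ℝ) • Finsupp.single n (v n) = T + (-s) • oneVec n := by
    rw [hid, neg_smul]; abel
  have h3 : N ((n : ℝ) • Finsupp.single n (v n)) = n * |v n| := by
    rw [hsmul, N_single e N hadd hsmul hdef hperm hmul hone]
    rw [abs_of_nonneg (by positivity : (0:ℝ) ≤ (n:ℝ))]
  have h4 : N ((n : ℝ) • Finsupp.single n (v n)) ≤ N T + |s| := by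
    rw [h2]
    refine le_trans (hadd _ _) ?_
    rw [hsmul, hone n hn, abs_neg, mul_one]
  linarith

lemma lower_bound (u : ℕ →₀ ℝ) (hu : ∑ i ∈ u.support, u i = 0) (i0 : ℕ) :
    |u i0| ≤ N u := by
  by_cases h0 : u i0 = 0
  · rw [h0, abs_zero]
    exact N_nonneg e N hadd hsmul hdef hperm hmul hone u
  have hi0 : i0 ∈ u.support := Finsupp.mem_support_iff.mpr h0
  obtain ⟨m, hm⟩ : ∃ m, ∀ i ∈ u.support, i < m :=
    ⟨u.support.max' ⟨i0, hi0⟩ + 1, fun i hi => by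
      have := Finset.le_max' _ i hi; omega⟩
  have key : ∀ n, m ≤ n → (n : ℝ) * |u i0| ≤ n * N u + |u i0| := by
    intro n hn
    have hn1 : 1 ≤ n := le_trans (by have := hm i0 hi0; omega) hn
    set τ := Equiv.swap i0 n with hτ
    set v := Finsupp.equivMapDomain (τ : Equiv.Perm ℕ) u with hv
    have hvapp : ∀ i, v i = u (τ i) := by
      intro i
      rw [hv, Finsupp.equivMapDomain_apply, hτ, Equiv.symm_swap]
    have hvn : v n = u i0 := by rw [hvapp, hτ, Equiv.swap_apply_right]
    have hvsupp : ∀ i, n < i → v i = 0 := by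
      intro i hi
      rw [hvapp]
      have h1 : i ≠ i0 := by have := hm i0 hi0; omega
      have h2 : i ≠ n := by omega
      rw [hτ, Equiv.swap_apply_of_ne_of_ne h1 h2]
      exact Finsupp.notMem_support_iff.mp (fun hmem => by have := hm i hmem; omega)
    have hsum : ∑ i ∈ Finset.range n, v i = - u i0 := by
      have hsub : v.support ⊆ Finset.range (n + 1) := by
        intro i hi
        rw [Finset.mem_range]
        by_contra hcon
        exact (Finsupp.mem_support_iff.mp hi) (hvsupp i (by omega))
      have e1 : ∑ i ∈ v.support, v i = ∑ i ∈ Finset.range (n + 1), v i :=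
        Finset.sum_subset hsub (fun i _ hi => Finsupp.notMem_support_iff.mp hi)
      have e2 : ∑ i ∈ v.support, v i = 0 := by rw [hv, sum_equivMapDomain, hu]
      rw [Finset.sum_range_succ, hvn, e2] at e1
      linarith
    have hri := rot_ineq e N hadd hsmul hdef hperm hmul hone n hn1 v hvsupp
    rw [hvn, hsum, abs_neg] at hri
    rwa [hv, hperm] at hri
  by_contra hc
  push_neg at hc
  set d := |u i0| - N u with hd
  have hd0 : 0 < d := by simp only [hd]; linarith
  obtain ⟨n0, hn0⟩ := exists_nat_gt (|u i0| / d)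
  have h1 := key (max n0 m) (le_max_right _ _)
  have h2 : |u i0| / d < ((max n0 m : ℕ) : ℝ) :=
    lt_of_lt_of_le hn0 (by exact_mod_cast le_max_left n0 m)
  have h3 : |u i0| < ((max n0 m : ℕ) : ℝ) * d := by rwa [div_lt_iff₀ hd0] at h2
  rw [hd, mul_sub] at h3
  linarith

end NLemmas

/-- If `‖1ⁿ‖ = 1` for every `n ≥ 1`, then `‖x‖ = ‖x‖_∞ = max_i |x_i|`. -/
theorem linfty_case
    (e : ℕ ≃ ℕ × ℕ) (N : (ℕ →₀ ℝ) → ℝ)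
    (hadd : ∀ x y, N (x + y) ≤ N x + N y)
    (hsmul : ∀ (c : ℝ) (x), N (c • x) = |c| * N x)
    (hdef : ∀ x, N x = 0 ↔ x = 0)
    (hperm : ∀ (σ : Equiv.Perm ℕ) (x), N (Finsupp.equivMapDomain σ x) = N x)
    (hmul : ∀ x y, N (tensor e x y) = N x * N y)
    (hone : ∀ n : ℕ, 1 ≤ n → N (oneVec n) = 1) :
    ∀ x : ℕ →₀ ℝ, N x = ⨆ i, |x i| := by
  intro x
  by_cases hx : x = 0
  · subst hx
    rw [N_zero e N hadd hsmul hdef hperm hmul hone]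
    symm
    simp only [Finsupp.coe_zero, Pi.zero_apply, abs_zero]
    exact ciSup_const
  · have hsupp : x.support.Nonempty := Finsupp.support_nonempty_iff.mpr hx
    obtain ⟨i0, hi0, hmax⟩ := Finset.exists_max_image x.support (fun i => |x i|) hsupp
    have hM : ∀ i, |x i| ≤ |x i0| := by
      intro i
      by_cases h : i ∈ x.support
      · exact hmax i h
      · rw [Finsupp.notMem_support_iff.mp h, abs_zero]
        exact abs_nonneg _
    have hub : N x ≤ |x i0| := UB e N hadd hsmul hdef hperm hmul hone x _ hM
    set w : ℕ →₀ ℝ := Finsupp.single 0 1 - Finsupp.single 1 1 with hw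
    have hw0 : w 0 = 1 := by simp [hw, Finsupp.single_apply]
    have hw1 : w 1 = -1 := by simp [hw, Finsupp.single_apply]
    have hwk : ∀ k, w (k + 2) = 0 := by
      intro k; simp [hw, Finsupp.single_apply]
    have hwi : ∀ i, |w i| ≤ 1 := by
      intro i
      match i with
      | 0 => rw [hw0]; norm_num
      | 1 => rw [hw1]; norm_num
      | (k + 2) => rw [hwk]; norm_num
    have hNw : N w ≤ 1 := UB e N hadd hsmul hdef hperm hmul hone w 1 hwi
    have hwsum : ∑ i ∈ w.support, w i = 0 := by
      have hsub : w.support ⊆ {0, 1} := by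
        intro i hi
        rw [Finsupp.mem_support_iff] at hi
        match i with
        | 0 => simp
        | 1 => simp
        | k + 2 => exact absurd (hwk k) hi
      have hss := Finset.sum_subset hsub (fun i _ hi => Finsupp.notMem_support_iff.mp hi)
      rw [hss, Finset.sum_pair (by norm_num : (0:ℕ) ≠ 1), hw0, hw1]
      ring
    set z := tensor e x w with hz
    have hzsum : ∑ i ∈ z.support, z i = 0 := by
      rw [hz, sum_tensor, hwsum, mul_zero]
    have hzp : z (e.symm (i0, 0)) = x i0 := by
      rw [hz, tensor_apply, Equiv.apply_symm_apply, hw0, mul_one]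
    have hlow := lower_bound e N hadd hsmul hdef hperm hmul hone z hzsum (e.symm (i0, 0))
    rw [hzp, hz, hmul] at hlow
    have hNx0 : 0 ≤ N x := N_nonneg e N hadd hsmul hdef hperm hmul hone x
    have hlb : |x i0| ≤ N x := by nlinarith
    have hNx : N x = |x i0| := le_antisymm hub hlb
    rw [hNx]
    symm
    apply le_antisymm
    · exact ciSup_le hM
    · exact le_ciSup ⟨|x i0|, by rintro _ ⟨i, rfl⟩; exact hM i⟩ i0
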